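/- Conversely, if ρ is a bipartite density operator on H_A ⊗ H_B and there exists a complete family {π_j} of mutually orthogonal rank-one projectors on H_A (summing to the identity) such that Σ_j (π_j ⊗ I) ρ (π_j ⊗ I) = ρ, then ρ has the form ρ = Σ_j p_j · π_j ⊗ ρ_j for some probability distribution {p_j} and density operators {ρ_j} on H_B. -/

import Mathlib

open Matrix
open scoped Kronecker ComplexOrder

noncomputable section

abbrev Mat (n : Type) := Matrix n n ℂ

/-- A density operator: positive semidefinite with unit trace. -/
def IsDensity {n : Type} [Fintype n] (ρ : Mat n) : Prop :=
  ρ.PosSemidef ∧ ρ.trace = 1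

/-- A rank-one projector: Hermitian idempotent of trace one. -/
def IsRankOneProj {n : Type} [Fintype n] (π : Mat n) : Prop :=
  π.IsHermitian ∧ π * π = π ∧ π.trace = 1

/-- A mutually orthogonal family of operators. -/
def OrthFamily {n J : Type} [Fintype n] (π : J → Mat n) : Prop :=
  ∀ i j : J, i ≠ j → π i * π j = 0

/-- A probability distribution on a finite index set. -/
def IsProbDist {J : Type} [Fintype J] (p : J → ℝ) : Prop :=
  (∀ j, 0 ≤ p j) ∧ ∑ j, p j = 1

/-- Outer product |v⟩⟨v|. -/
def outer {n : Type} (v : n → ℂ) : Mat n :=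
  fun i j => v i * star (v j)

/-- Partial trace over the first (Alice) factor. -/
def traceA {a b : Type} [Fintype a] (ρ : Mat (a × b)) : Mat b :=
  fun i j => ∑ k, ρ (k, i) (k, j)

/-- Partial trace over the second (Bob) factor. -/
def traceB {a b : Type} [Fintype b] (ρ : Mat (a × b)) : Mat a :=
  fun i j => ∑ k, ρ (i, k) (j, k)

/-- Separable (unentangled): a convex combination of product density operators. -/
def Separable {a b : Type} [Fintype a] [Fintype b] (ρ : Mat (a × b)) : Prop :=
  ∃ (m : ℕ) (p : Fin m → ℝ) (σ : Fin m → Mat a) (τ : Fin m → Mat b),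
    IsProbDist p ∧ (∀ k, IsDensity (σ k)) ∧ (∀ k, IsDensity (τ k)) ∧
    ρ = ∑ k, (p k : ℂ) • (σ k ⊗ₖ τ k)

/-- Alice-concordant (zero Alice-discord): ρ = Σ_j p_j π_j ⊗ ρ_j with
{π_j} mutually orthogonal rank-one projectors on Alice's factor. -/
def AliceConcordant {a b : Type} [Fintype a] [Fintype b] (ρ : Mat (a × b)) : Prop :=
  ∃ (m : ℕ) (p : Fin m → ℝ) (π : Fin m → Mat a) (σ : Fin m → Mat b),
    IsProbDist p ∧ (∀ j, IsRankOneProj (π j)) ∧ OrthFamily π ∧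
    (∀ j, IsDensity (σ j)) ∧ ρ = ∑ j, (p j : ℂ) • (π j ⊗ₖ σ j)

/-- Bob-concordant: the symmetric notion. -/
def BobConcordant {a b : Type} [Fintype a] [Fintype b] (ρ : Mat (a × b)) : Prop :=
  ∃ (m : ℕ) (p : Fin m → ℝ) (σ : Fin m → Mat a) (π : Fin m → Mat b),
    IsProbDist p ∧ (∀ j, IsRankOneProj (π j)) ∧ OrthFamily π ∧
    (∀ j, IsDensity (σ j)) ∧ ρ = ∑ j, (p j : ℂ) • (σ j ⊗ₖ π j)

/-- Von Neumann entropy, via the eigenvalues of a Hermitian matrix. -/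
def vN {n : Type} [Fintype n] [DecidableEq n] (ρ : Mat n) : ℝ :=
  if h : ρ.IsHermitian then -∑ i, h.eigenvalues i * Real.log (h.eigenvalues i) else 0


section Auxiliary

variable {n : Type} [Fintype n] [DecidableEq n]

lemma rankOne_exists {π : Mat n} (h : IsRankOneProj π) : ∃ v : n → ℂ, π = outer v := by
  classical
  obtain ⟨hH, hidem, htr⟩ := h
  set U : Matrix n n ℂ := (hH.eigenvectorUnitary : Matrix n n ℂ) with hU
  set lam := hH.eigenvalues with hlam
  have hspec : π = (hH.eigenvectorUnitary : Matrix n n ℂ) * diagonal (RCLike.ofReal ∘ hH.eigenvalues) * star (hH.eigenvectorUnitary : Matrix n n ℂ) := by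
    have := hH.spectral_theorem; rwa [Unitary.conjStarAlgAut_apply] at this
  have hUU : U * star U = 1 := Matrix.mem_unitaryGroup_iff.mp hH.eigenvectorUnitary.2
  set D : Matrix n n ℂ := Matrix.diagonal (Complex.ofReal ∘ lam) with hD
  have h1 : star U * π * U = D := by
    have hUU' : star U * U = 1 := Matrix.mem_unitaryGroup_iff'.mp hH.eigenvectorUnitary.2
    rw [hspec, ← hU, ← hlam]
    simp only [Matrix.mul_assoc, hUU, Matrix.mul_one]
    rw [← Matrix.mul_assoc, hUU', Matrix.one_mul, Matrix.mul_one]; rfl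
  have hDD : D * D = D := by
    calc D * D = (star U * π * U) * (star U * π * U) := by rw [h1]
    _ = star U * (π * (U * star U) * π) * U := by simp only [Matrix.mul_assoc]
    _ = star U * π * U := by rw [hUU, Matrix.mul_one, hidem, Matrix.mul_assoc]
    _ = D := h1
  have hsq : ∀ i, lam i = 0 ∨ lam i = 1 := by
    intro i
    have h2 := congrFun (congrFun hDD i) i
    simp [hD, Matrix.diagonal_mul_diagonal, Matrix.diagonal_apply_eq] at h2
    have h3 : lam i * lam i = lam i := by exact_mod_cast h2
    have h4 : lam i * (lam i - 1) = 0 := by ring_nf; linarith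
    rcases mul_eq_zero.mp h4 with h | h
    · exact Or.inl h
    · exact Or.inr (by linarith)
  have hsum : ∑ i, lam i = 1 := by
    have ht2 : π.trace = D.trace := by
      rw [hspec, Matrix.trace_mul_cycle]
      rw [show star (hH.eigenvectorUnitary : Matrix n n ℂ) * ↑hH.eigenvectorUnitary = 1 from
        Matrix.mem_unitaryGroup_iff'.mp hH.eigenvectorUnitary.2, Matrix.one_mul]
      rfl
    rw [htr] at ht2
    have : (D.trace : ℂ) = (↑(∑ i, lam i) : ℂ) := by
      simp [hD, Matrix.trace_diagonal]
    rw [← ht2] at this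
    exact_mod_cast this.symm
  obtain ⟨i₀, h1', h0'⟩ : ∃ i₀ : n, lam i₀ = 1 ∧ ∀ i, i ≠ i₀ → lam i = 0 := by
    set s := Finset.univ.filter (fun i => lam i = 1) with hs
    have hh1 : ∑ i, lam i = ∑ i ∈ s, lam i := by
      refine (Finset.sum_subset (Finset.filter_subset _ _) fun i _ hi => ?_).symm
      rcases hsq i with h | h
      · exact h
      · exact absurd (Finset.mem_filter.mpr ⟨Finset.mem_univ i, h⟩) hi
    have hh2 : ∑ i ∈ s, lam i = (s.card : ℝ) := by
      rw [Finset.sum_congr rfl (fun i hi => (Finset.mem_filter.mp hi).2)]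
      simp; rfl
    have hh3 : s.card = 1 := by
      have : (s.card : ℝ) = 1 := by rw [← hh2, ← hh1, hsum]
      exact_mod_cast this
    obtain ⟨i₀, hi₀⟩ := Finset.card_eq_one.mp hh3
    refine ⟨i₀, ?_, ?_⟩
    · have : i₀ ∈ s := hi₀ ▸ Finset.mem_singleton_self i₀
      exact (Finset.mem_filter.mp this).2
    · intro i hne
      rcases hsq i with h | h
      · exact h
      · have hmem : i ∈ s := Finset.mem_filter.mpr ⟨Finset.mem_univ i, h⟩
        rw [hi₀] at hmem
        exact absurd (Finset.mem_singleton.mp hmem) hne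
  refine ⟨fun x => U x i₀, ?_⟩
  have : U * D * star U = outer (fun x => U x i₀) := by
    funext x y
    simp only [Matrix.mul_apply, Function.comp_apply,
      Matrix.star_apply, Matrix.conjTranspose_apply, outer, hD]
    rw [Finset.sum_eq_single i₀]
    · simp [Matrix.diagonal_apply, Finset.sum_ite_eq, h1']
    · intro k _ hk
      simp [Matrix.diagonal_apply, Finset.sum_ite_eq, h0' k hk]
    · intro hk; exact absurd (Finset.mem_univ i₀) hk
  rw [← this, hspec]; rfl

lemma psd_trace_zero {M : Mat n} (h : M.PosSemidef) (ht : M.trace = 0) : M = 0 := by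
  obtain ⟨B, rfl⟩ : ∃ B : Mat n, M = Bᴴ * B := by
    open scoped MatrixOrder in
    exact CStarAlgebra.nonneg_iff_eq_star_mul_self.mp h.nonneg
  have hB : B = 0 := by
    have h1 : ∑ i, ∑ j, Complex.normSq (B j i) = 0 := by
      have h2 := congrArg Complex.re ht
      simpa [Matrix.trace, Matrix.diag, Matrix.mul_apply, Matrix.conjTranspose_apply,
        Complex.mul_re, Complex.normSq_apply, mul_comm] using h2
    funext i j
    have := (Finset.sum_eq_zero_iff_of_nonneg (fun i _ => Finset.sum_nonneg
      (fun j _ => Complex.normSq_nonneg _))).mp h1 j (Finset.mem_univ _)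
    have := (Finset.sum_eq_zero_iff_of_nonneg
      (fun j _ => Complex.normSq_nonneg _)).mp this i (Finset.mem_univ _)
    exact Complex.normSq_eq_zero.mp this
  simp [hB]

lemma psd_diag_nonneg {M : Mat n} (h : M.PosSemidef) (k : n) : 0 ≤ M k k := by
  exact h.diag_nonneg

lemma psd_trace_nonneg {M : Mat n} (h : M.PosSemidef) : 0 ≤ M.trace :=
  Finset.sum_nonneg fun k _ => psd_diag_nonneg h k

lemma psd_smul {m : Type} [Fintype m] {M : Mat m} (h : M.PosSemidef)
    {r : ℝ} (hr : 0 ≤ r) : ((r : ℂ) • M).PosSemidef := by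
  constructor
  · unfold Matrix.IsHermitian
    rw [Matrix.conjTranspose_smul, h.1.eq, Complex.star_def, Complex.conj_ofReal]
  · exact (h.smul (a := (r : ℂ)) (by exact_mod_cast hr)).2

lemma blockEq {a b : Type} [Fintype a] [Fintype b] [DecidableEq a] [DecidableEq b]
    (ρ : Mat (a × b)) (v : a → ℂ) :
    (outer v ⊗ₖ (1 : Mat b)) * ρ * (outer v ⊗ₖ (1 : Mat b)) =
      outer v ⊗ₖ (fun k l => ∑ x, ∑ y, (starRingEnd ℂ) (v x) * ρ (x, k) (y, l) * v y) := by
  funext ⟨x, k⟩ ⟨y, l⟩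
  simp only [Matrix.mul_apply, Matrix.kroneckerMap_apply, outer, Matrix.one_apply,
    Fintype.sum_prod_type]
  simp only [mul_ite, mul_one, mul_zero, ite_mul, zero_mul, Finset.sum_ite_eq',
    Finset.sum_ite_eq, Finset.mem_univ, if_true]
  erw [Matrix.kroneckerMap_apply]; unfold outer
  conv_rhs => rw [Finset.sum_comm]
  rw [Finset.mul_sum]
  refine Finset.sum_congr rfl fun y' _ => ?_
  rw [Finset.sum_mul, Finset.mul_sum]
  refine Finset.sum_congr rfl fun x' _ => ?_
  simp only [Complex.star_def]
  ring

lemma M_psd {a b : Type} [Fintype a] [Fintype b] [DecidableEq b]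
    (ρ : Mat (a × b)) (hρ : ρ.PosSemidef) (v : a → ℂ) :
    Matrix.PosSemidef (fun k l => ∑ x, ∑ y, (starRingEnd ℂ) (v x) * ρ (x, k) (y, l) * v y : Mat b) := by
  classical
  set T : Matrix (a × b) b ℂ := fun p l => v p.1 * (if p.2 = l then (1:ℂ) else 0) with hT
  have key : (fun k l => ∑ x, ∑ y, (starRingEnd ℂ) (v x) * ρ (x, k) (y, l) * v y : Mat b)
      = Tᴴ * ρ * T := by
    funext k l
    simp only [Matrix.mul_apply, Matrix.conjTranspose_apply]
    simp only [Matrix.mul_apply, Matrix.conjTranspose_apply, hT, Fintype.sum_prod_type,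
      mul_ite, mul_one, mul_zero, ite_mul, zero_mul,
      Finset.sum_ite_eq', Finset.sum_ite_eq, Finset.mem_univ, if_true]
    have hax : ∀ x' x : a, (∑ x2 : b, star (if x2 = k then v x' else 0) * ρ (x', x2) (x, l))
        = star (v x') * ρ (x', k) (x, l) := by
      intro x' x
      simp [apply_ite (star : ℂ → ℂ), ite_mul, zero_mul, Finset.sum_ite_eq]
    simp only [hax, Finset.sum_mul]
    rw [Finset.sum_comm]
    refine Finset.sum_congr rfl fun x _ => ?_
    refine Finset.sum_congr rfl fun x' _ => ?_
    simp [Complex.star_def]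
  rw [key]
  exact hρ.conjTranspose_mul_mul_same T

end Auxiliary

/-- if a complete family of orthogonal rank-one projectors on H_A leaves ρ
invariant under the unrecorded measurement, then ρ is of the Alice-concordant form. -/
theorem stmt_2 {a b J : Type} [Fintype a] [Fintype b] [Fintype J] [DecidableEq a] [DecidableEq b]
    (ρ : Mat (a × b)) (π : J → Mat a)
    (hρ : IsDensity ρ) (hπ : ∀ j, IsRankOneProj (π j)) (horth : OrthFamily π)
    (hcomp : ∑ j, π j = 1)
    (hinv : ∑ j, (π j ⊗ₖ (1 : Mat b)) * ρ * (π j ⊗ₖ (1 : Mat b)) = ρ) :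
    ∃ (p : J → ℝ) (σ : J → Mat b), IsProbDist p ∧ (∀ j, IsDensity (σ j)) ∧
      ρ = ∑ j, (p j : ℂ) • (π j ⊗ₖ σ j) := by
  classical
  by_cases hbE : IsEmpty b
  · exfalso
    have h1 := hρ.2
    haveI : IsEmpty (a × b) := ⟨fun p => hbE.elim p.2⟩
    rw [Matrix.trace] at h1
    simp [Finset.univ_eq_empty] at h1
  haveI hbNE : Nonempty b := not_isEmpty_iff.mp hbE
  choose v hv using fun j => rankOne_exists (hπ j)
  set M : J → Mat b := fun j => fun k l =>
    ∑ x, ∑ y, (starRingEnd ℂ) (v j x) * ρ (x, k) (y, l) * v j y with hM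
  have hblock : ∀ j, (π j ⊗ₖ (1 : Mat b)) * ρ * (π j ⊗ₖ (1 : Mat b)) = π j ⊗ₖ M j := by
    intro j
    rw [hv j]
    exact blockEq ρ (v j)
  have hdecomp : ρ = ∑ j, π j ⊗ₖ M j := by
    rw [← hinv]
    exact Finset.sum_congr rfl fun j _ => hblock j
  have hMpsd : ∀ j, (M j).PosSemidef := fun j => M_psd ρ hρ.1 (v j)
  have htrM : ∑ j, (M j).trace = 1 := by
    have h2 := congrArg Matrix.trace hdecomp
    rw [hρ.2, Matrix.trace_sum] at h2
    have h3 : ∀ j, (π j ⊗ₖ M j).trace = (M j).trace := by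
      intro j
      rw [Matrix.trace_kronecker, (hπ j).2.2, one_mul]
    rw [Finset.sum_congr rfl fun j _ => h3 j] at h2
    exact h2.symm
  have htreal : ∀ j, (M j).trace = (((M j).trace.re : ℝ) : ℂ) ∧ 0 ≤ (M j).trace.re := by
    intro j
    have h0 := psd_trace_nonneg (hMpsd j)
    rw [Complex.le_def] at h0
    refine ⟨Complex.ext rfl ?_, by simpa using h0.1⟩
    simpa using h0.2.symm
  set p : J → ℝ := fun j => (M j).trace.re with hp
  set σ : J → Mat b := fun j =>
    if (M j).trace = 0 then (((Fintype.card b : ℝ)⁻¹ : ℝ) : ℂ) • (1 : Mat b)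
    else ((M j).trace)⁻¹ • M j with hσ
  have hcardb : (0 : ℝ) < (Fintype.card b : ℝ) := by
    exact_mod_cast Fintype.card_pos
  refine ⟨p, σ, ⟨fun j => (htreal j).2, ?_⟩, ?_, ?_⟩
  · -- sum of p = 1
    have := congrArg Complex.re htrM
    simpa [hp, Complex.re_sum] using this
  · -- densities
    intro j
    by_cases h0 : (M j).trace = 0
    · rw [hσ]
      simp only [h0, if_true]
      constructor
      · exact psd_smul Matrix.PosSemidef.one (by positivity)
      · rw [Matrix.trace_smul, Matrix.trace_one]
        simp only [smul_eq_mul]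
        rw [← Complex.ofReal_natCast, ← Complex.ofReal_mul]
        rw [inv_mul_cancel₀ (ne_of_gt hcardb)]
        exact Complex.ofReal_one
    · rw [hσ]
      simp only [h0, if_false]
      have htj := (htreal j).1
      have hpj : (0:ℝ) ≤ p j := (htreal j).2
      have hinveq : ((M j).trace)⁻¹ = (((p j)⁻¹ : ℝ) : ℂ) := by
        rw [htj, ← Complex.ofReal_inv]
      constructor
      · rw [hinveq]
        exact psd_smul (hMpsd j) (inv_nonneg.mpr hpj)
      · rw [Matrix.trace_smul, smul_eq_mul, inv_mul_cancel₀ h0]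
  · -- the decomposition
    rw [hdecomp]
    refine Finset.sum_congr rfl fun j _ => ?_
    by_cases h0 : (M j).trace = 0
    · have hMz : M j = 0 := psd_trace_zero (hMpsd j) h0
      have hpz : p j = 0 := by rw [hp]; simp [h0]
      rw [hMz, hpz]
      simp
    · have htj := (htreal j).1
      rw [hσ]
      simp only [h0, if_false]
      rw [Matrix.kronecker_smul, smul_smul, ← htj, mul_inv_cancel₀ h0, one_smul]
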